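/- Let ν ∈ N with ⟨ν, e_i⟩ > 0 for all 1 ≤ i ≤ d, and let 1 ≤ k ≤ d be such that φ_k(ν) < φ_{k+1}(ν) (this holds automatically when k = d since φ_{d+1} = +∞). If e_{r_1} + … + e_{r_k} and e_{r'_1} + … + e_{r'_k} are two elements of J_k, each written as a sum of k linearly independent vectors among e_1, …, e_{d+g} with at most one index exceeding d, and both attain the minimum ord_{J_k}(ν), then span_ℚ{e_{r_1}, …, e_{r_k}} = span_ℚ{e_{r'_1}, …, e_{r'_k}}. -/

import Mathlib

open scoped BigOperators Classical

namespace QO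

/-- The standard pairing `⟨ν, m⟩ = ∑ i, ν i * m i` on `ℚ^d`. -/
def pair (d : ℕ) (ν m : Fin d → ℚ) : ℚ := ∑ i, ν i * m i

/-- `E d lam i` is the `i`-th standard basis vector of `ℚ^d` for `1 ≤ i ≤ d`,
and equals the characteristic exponent `λ_{i-d}` for `d + 1 ≤ i` (1-based indexing). -/
def E (d : ℕ) (lam : ℕ → Fin d → ℚ) (i : ℕ) : Fin d → ℚ :=
  if 1 ≤ i ∧ i ≤ d then (fun j => if (j : ℕ) = i - 1 then 1 else 0) else lam (i - d)

/-- The lattice `M_j = ℤ^d + ℤλ_1 + ⋯ + ℤλ_j`, as an additive subgroup of `ℚ^d`. -/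
def Mlat (d : ℕ) (lam : ℕ → Fin d → ℚ) : ℕ → AddSubgroup (Fin d → ℚ)
  | 0 => AddSubgroup.closure (Set.range fun i : Fin d => (fun j => if j = i then (1 : ℚ) else 0))
  | (j + 1) => Mlat d lam j ⊔ AddSubgroup.closure {lam (j + 1)}

/-- The dual lattice `N` of `M = M_g`. -/
def Ndual (d g : ℕ) (lam : ℕ → Fin d → ℚ) : Set (Fin d → ℚ) :=
  { ν | ∀ m ∈ Mlat d lam g, ∃ z : ℤ, pair d ν m = (z : ℚ) }

/-- Admissible index sets for `J_k`: `k` indices in `{1, …, d+g}`, at most one of which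
exceeds `d`, whose associated vectors are linearly independent over `ℚ`. -/
def IdxOk (d g : ℕ) (lam : ℕ → Fin d → ℚ) (k : ℕ) (I : Finset ℕ) : Prop :=
  I.card = k ∧ I ⊆ Finset.Icc 1 (d + g) ∧ (I.filter fun i => d + 1 ≤ i).card ≤ 1 ∧
    LinearIndependent ℚ (fun i : {x // x ∈ I} => E d lam i.1)

/-- The set `J_k` of sums `e_{j_1} + ⋯ + e_{j_k}`. -/
def Jset (d g : ℕ) (lam : ℕ → Fin d → ℚ) (k : ℕ) : Set (Fin d → ℚ) :=
  { w | ∃ I : Finset ℕ, IdxOk d g lam k I ∧ w = ∑ i ∈ I, E d lam i }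

/-- The set `J_k`, as a finite set. -/
noncomputable def Jfin (d g : ℕ) (lam : ℕ → Fin d → ℚ) (k : ℕ) : Finset (Fin d → ℚ) :=
  ((Finset.Icc 1 (d + g)).powerset.filter fun I => IdxOk d g lam k I).image
    fun I => ∑ i ∈ I, E d lam i

/-- The support function `ord_{J_k}(ν) = min_{w ∈ J_k} ⟨ν, w⟩`. -/
noncomputable def ordJ (d g : ℕ) (lam : ℕ → Fin d → ℚ) (k : ℕ) (ν : Fin d → ℚ) : ℚ :=
  if h : (Jfin d g lam k).Nonempty then ((Jfin d g lam k).image (pair d ν)).min' (h.image _)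
  else 0

/-- `φ_k(ν) = ord_{J_k}(ν) - ord_{J_{k-1}}(ν)` (note `ord_{J_0} = 0`, hence also `φ_0 = 0`). -/
noncomputable def phiJ (d g : ℕ) (lam : ℕ → Fin d → ℚ) (k : ℕ) (ν : Fin d → ℚ) : ℚ :=
  ordJ d g lam k ν - ordJ d g lam (k - 1) ν

/-- The sort key of the total order `≤_ν` on the indices `1, …, d+g`: sort by the value
`⟨ν, ·⟩`, breaking ties (in particular ties between an `e_i` with `i ≤ d` and a `λ_j`)
by the index, so that `e_i` is placed first. -/
noncomputable def keyIdx (d : ℕ) (lam : ℕ → Fin d → ℚ) (ν : Fin d → ℚ) (i : ℕ) : ℚ ×ₗ ℕ :=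
  toLex (pair d ν (E d lam i), i)

/-- The `≤_ν`-least element of a finite set of indices. -/
noncomputable def leastIdx (d : ℕ) (lam : ℕ → Fin d → ℚ) (ν : Fin d → ℚ) (S : Finset ℕ) : ℕ :=
  if h : S.Nonempty then (ofLex ((S.image (keyIdx d lam ν)).min' (h.image _))).2 else 0

/-- The `≤_ν`-greatest element of a finite set of indices. -/
noncomputable def greatestIdx (d : ℕ) (lam : ℕ → Fin d → ℚ) (ν : Fin d → ℚ)
    (S : Finset ℕ) : ℕ :=
  if h : S.Nonempty then (ofLex ((S.image (keyIdx d lam ν)).max' (h.image _))).2 else 0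

/-- The `ℚ`-span of the vectors indexed by `I`. -/
def spanOf (d : ℕ) (lam : ℕ → Fin d → ℚ) (I : Finset ℕ) : Submodule ℚ (Fin d → ℚ) :=
  Submodule.span ℚ ((fun i => E d lam i) '' (I : Set ℕ))

/-- `n(k)`: the index `n` such that `λ_n` is a summand of `w_k`, and `0` if there is none. -/
noncomputable def nVal (d : ℕ) (I : Finset ℕ) : ℕ :=
  if h : (I.filter fun i => d + 1 ≤ i).Nonempty then (I.filter fun i => d + 1 ≤ i).min' h - d
  else 0

/-- `t(k)`: the least `1 ≤ j ≤ g` with `λ_j ∉ ℓ_k(ν)`, and `g + 1` if there is none. -/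
noncomputable def tVal (d g : ℕ) (lam : ℕ → Fin d → ℚ) (I : Finset ℕ) : ℕ :=
  if h : ((Finset.Icc 1 g).filter fun j => lam j ∉ spanOf d lam I).Nonempty then
    ((Finset.Icc 1 g).filter fun j => lam j ∉ spanOf d lam I).min' h
  else g + 1

/-- `m(k)`: the index `m` with `({e_1, …, e_d} ∩ ℓ_k(ν)) ∖ {summands of w_k} = {e_m}`,
and `0` if this set is empty. -/
noncomputable def mVal (d : ℕ) (lam : ℕ → Fin d → ℚ) (I : Finset ℕ) : ℕ :=
  if h : (((Finset.Icc 1 d).filter fun i => E d lam i ∈ spanOf d lam I) \ I).Nonempty then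
    (((Finset.Icc 1 d).filter fun i => E d lam i ∈ spanOf d lam I) \ I).min' h
  else 0

/-- `i(k)`: the `≤_ν`-least index `1 ≤ i ≤ d + g` with `w_k + e_i ∈ J_{k+1}`. -/
noncomputable def iVal (d g : ℕ) (lam : ℕ → Fin d → ℚ) (ν : Fin d → ℚ) (k : ℕ)
    (I : Finset ℕ) : ℕ :=
  leastIdx d lam ν ((Finset.Icc 1 (d + g)).filter fun i => IdxOk d g lam (k + 1) (insert i I))

/-- One step of the algorithm, from the summands of `w_k` to the summands of `w_{k+1}`:
`a_{k+1} = w_k + e_{i(k)}` and `b_{k+1} = w_k - λ_{n(k)} + λ_{t(k)} + e_{m(k)}`; the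
candidate `b_{k+1}` is discarded when `m(k) = 0` or `t(k) = g + 1`, and otherwise
`w_{k+1} = a_{k+1}` exactly when `⟨ν, a_{k+1}⟩ ≤ ⟨ν, b_{k+1}⟩`. -/
noncomputable def step (d g : ℕ) (lam : ℕ → Fin d → ℚ) (ν : Fin d → ℚ) (k : ℕ)
    (I : Finset ℕ) : Finset ℕ :=
  let a : Finset ℕ := insert (iVal d g lam ν k I) I
  let b : Finset ℕ :=
    insert (mVal d lam I) (insert (d + tVal d g lam I)
      (if nVal d I = 0 then I else I.erase (d + nVal d I)))
  if mVal d lam I = 0 ∨ tVal d g lam I = g + 1 then a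
  else if pair d ν (∑ i ∈ a, E d lam i) ≤ pair d ν (∑ i ∈ b, E d lam i) then a else b

/-- The index sets `W ν k` of summands of the algorithm's vectors `w_k`; the vector `w_1`
is the `≤_ν`-least element of `{e_1, …, e_d, λ_1}`. -/
noncomputable def W (d g : ℕ) (lam : ℕ → Fin d → ℚ) (ν : Fin d → ℚ) : ℕ → Finset ℕ
  | 0 => ∅
  | 1 => {leastIdx d lam ν (insert (d + 1) (Finset.Icc 1 d))}
  | (k + 2) => step d g lam ν (k + 1) (W d g lam ν (k + 1))

/-- The algorithm's vector `w_k`. -/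
noncomputable def wVec (d g : ℕ) (lam : ℕ → Fin d → ℚ) (ν : Fin d → ℚ) (k : ℕ) :
    Fin d → ℚ :=
  ∑ i ∈ W d g lam ν k, E d lam i

/-- `ℓ_k(ν)`: the `ℚ`-span of the summands of `w_k`. -/
noncomputable def ellK (d g : ℕ) (lam : ℕ → Fin d → ℚ) (ν : Fin d → ℚ) (k : ℕ) :
    Submodule ℚ (Fin d → ℚ) :=
  spanOf d lam (W d g lam ν k)

/-- `ℓ_ν^s = span_ℚ{e_j : 1 ≤ j < d + t(k), ⟨ν, e_j⟩ ≤ s}`, where `k` is the index with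
`φ_k(ν) ≤ s < φ_{k+1}(ν)`. -/
noncomputable def ellS (d g : ℕ) (lam : ℕ → Fin d → ℚ) (ν : Fin d → ℚ) (s : ℚ) (k : ℕ) :
    Submodule ℚ (Fin d → ℚ) :=
  Submodule.span ℚ ((fun i => E d lam i) ''
    { i : ℕ | 1 ≤ i ∧ i < d + tVal d g lam (W d g lam ν k) ∧ pair d ν (E d lam i) ≤ s })

/-- `p(k)` (with the convention `λ_0 = 0`). -/
noncomputable def pVal (d g : ℕ) (lam : ℕ → Fin d → ℚ) (ν : Fin d → ℚ) (s : ℚ)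
    (k : ℕ) : ℕ :=
  if nVal d (W d g lam ν k) = 0 then
    if h : ((Finset.Icc 0 g).filter fun j =>
        pair d ν (if j = 0 then (0 : Fin d → ℚ) else lam j) ≤ s).Nonempty then
      ((Finset.Icc 0 g).filter fun j =>
        pair d ν (if j = 0 then (0 : Fin d → ℚ) else lam j) ≤ s).max' h
    else 0
  else
    (insert (nVal d (W d g lam ν k))
      ((Finset.Ioo (nVal d (W d g lam ν k)) (tVal d g lam (W d g lam ν k))).filter fun j =>
        mVal d lam (W d g lam ν k) ≠ 0 ∧
          pair d ν (E d lam (mVal d lam (W d g lam ν k)) - lam (nVal d (W d g lam ν k)) + lam j)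
            ≤ s)).max' (Finset.insert_nonempty _ _)

/-- `q_η`: the index of the `≤_ν`-greatest element of `{e_1, …, e_d} ∩ ℓ(η)`, where
`ℓ(η) = span_ℚ{e_i : η_i ≠ 0}`. -/
noncomputable def qIdx (d : ℕ) (lam : ℕ → Fin d → ℚ) (ν η : Fin d → ℚ) : ℕ :=
  greatestIdx d lam ν ((Finset.Icc 1 d).filter fun i => pair d η (E d lam i) ≠ 0)


section Helpers

variable {d g : ℕ} {lam : ℕ → Fin d → ℚ} {ν : Fin d → ℚ} {k : ℕ} {I : Finset ℕ}

lemma pair_sum (I : Finset ℕ) (f : ℕ → Fin d → ℚ) :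
    pair d ν (∑ i ∈ I, f i) = ∑ i ∈ I, pair d ν (f i) := by
  simp only [pair, Finset.sum_apply, Finset.mul_sum]
  exact Finset.sum_comm

lemma pair_add (a b : Fin d → ℚ) : pair d ν (a + b) = pair d ν a + pair d ν b := by
  simp [pair, mul_add, Finset.sum_add_distrib]

lemma pair_sub (a b : Fin d → ℚ) : pair d ν (a - b) = pair d ν a - pair d ν b := by
  simp [pair, mul_sub, Finset.sum_sub_distrib]

lemma pair_E_coord (c : Fin d) : pair d ν (E d lam (c.1 + 1)) = ν c := by
  have h1 : 1 ≤ c.1 + 1 ∧ c.1 + 1 ≤ d := ⟨by omega, c.2⟩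
  simp only [E, if_pos h1, Nat.add_sub_cancel, pair]
  rw [Finset.sum_eq_single c]
  · simp
  · intro b _ hb
    simp [Fin.val_eq_val, hb]
  · simp

lemma ordJ_le (hI : IdxOk d g lam k I) :
    ordJ d g lam k ν ≤ pair d ν (∑ i ∈ I, E d lam i) := by
  have hmem : (∑ i ∈ I, E d lam i) ∈ Jfin d g lam k := by
    apply Finset.mem_image_of_mem
    rw [Finset.mem_filter, Finset.mem_powerset]
    exact ⟨hI.2.1, hI⟩
  rw [ordJ, dif_pos ⟨_, hmem⟩]
  exact Finset.min'_le _ _ (Finset.mem_image_of_mem _ hmem)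

lemma injOn_of_li {T : Finset ℕ}
    (h : LinearIndependent ℚ (fun i : {x // x ∈ T} => E d lam i.1)) :
    Set.InjOn (E d lam) ↑T := by
  intro a ha b hb hab
  have h2 : (⟨a, ha⟩ : {x // x ∈ T}) = ⟨b, hb⟩ :=
    h.injective (show E d lam ((⟨a, ha⟩ : {x // x ∈ T}) : ℕ)
      = E d lam ((⟨b, hb⟩ : {x // x ∈ T}) : ℕ) from hab)
  exact congrArg Subtype.val h2

lemma idxok_injOn (hI : IdxOk d g lam k I) : Set.InjOn (E d lam) ↑I :=
  injOn_of_li hI.2.2.2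

lemma li_set_of_li {T : Finset ℕ}
    (h : LinearIndependent ℚ (fun i : {x // x ∈ T} => E d lam i.1)) :
    LinearIndependent ℚ ((↑) : (E d lam '' ↑T) → (Fin d → ℚ)) :=
  (linearIndepOn_iff_image (injOn_of_li h)).1 h

lemma idxok_li_set (hI : IdxOk d g lam k I) :
    LinearIndependent ℚ ((↑) : (E d lam '' ↑I) → (Fin d → ℚ)) :=
  li_set_of_li hI.2.2.2

lemma finrank_spanOf_card {T : Finset ℕ}
    (h : LinearIndependent ℚ (fun i : {x // x ∈ T} => E d lam i.1)) :
    Module.finrank ℚ (spanOf d lam T) = T.card := by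
  have h1 : spanOf d lam T = Submodule.span ℚ ↑(T.image (E d lam)) := by
    rw [spanOf, Finset.coe_image]
  have hli : LinearIndependent ℚ
      ((↑) : ↑(↑(T.image (E d lam)) : Set (Fin d → ℚ)) → (Fin d → ℚ)) := by
    rw [Finset.coe_image]; exact li_set_of_li h
  rw [h1, finrank_span_finset_eq_card hli, Finset.card_image_of_injOn (injOn_of_li h)]

lemma finrank_spanOf (hI : IdxOk d g lam k I) :
    Module.finrank ℚ (spanOf d lam I) = k := by
  rw [finrank_spanOf_card hI.2.2.2, hI.1]

lemma IdxOk.erase' (hI : IdxOk d g lam k I) (y : ℕ) (hy : y ∈ I) :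
    IdxOk d g lam (k - 1) (I.erase y) := by
  refine ⟨by rw [Finset.card_erase_of_mem hy, hI.1], (Finset.erase_subset _ _).trans hI.2.1,
    le_trans (Finset.card_le_card
      (Finset.filter_subset_filter _ (Finset.erase_subset _ _))) hI.2.2.1, ?_⟩
  have hsub : (↑(I.erase y) : Set ℕ) ⊆ ↑I := Finset.coe_subset.2 (Finset.erase_subset _ _)
  have hset := (show LinearIndepOn ℚ id (E d lam '' ↑I) from idxok_li_set hI).mono (Set.image_mono hsub)
  exact (linearIndepOn_iff_image ((idxok_injOn hI).mono hsub)).2 hset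

lemma IdxOk.insert' (hI : IdxOk d g lam k I) {x : ℕ} (hx : x ∈ Finset.Icc 1 (d + g))
    (hxs : E d lam x ∉ spanOf d lam I)
    (hfil : x ≤ d ∨ (I.filter fun i => d + 1 ≤ i) = ∅) :
    IdxOk d g lam (k + 1) (insert x I) := by
  have hxI : x ∉ I := fun h => hxs (Submodule.subset_span ⟨x, by simpa using h, rfl⟩)
  refine ⟨by rw [Finset.card_insert_of_notMem hxI, hI.1],
    Finset.insert_subset hx hI.2.1, ?_, ?_⟩
  · rw [Finset.filter_insert]
    split_ifs with h
    · rcases hfil with h' | h'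
      · omega
      · rw [h']; simp
    · exact hI.2.2.1
  · have hset : LinearIndependent ℚ
        ((↑) : ↑(insert (E d lam x) (E d lam '' ↑I)) → (Fin d → ℚ)) :=
      (show LinearIndepOn ℚ id (E d lam '' ↑I) from idxok_li_set hI).id_insert (by rwa [spanOf] at hxs)
    have hxim : E d lam x ∉ E d lam '' ↑I := fun h => hxs (Submodule.subset_span h)
    have hinj : Set.InjOn (E d lam) ↑(insert x I) := by
      rw [Finset.coe_insert]
      intro a ha b hb hab
      rcases ha with rfl | ha <;> rcases hb with rfl | hb
      · rfl
      · exact absurd ⟨b, hb, hab.symm⟩ hxim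
      · exact absurd ⟨a, ha, hab⟩ hxim
      · exact idxok_injOn hI ha hb hab
    exact (linearIndepOn_iff_image hinj).2 (by
      rw [Finset.coe_insert, Set.image_insert_eq]; exact hset)

lemma li_std (T : Finset ℕ) (hT : T ⊆ Finset.Icc 1 d) :
    LinearIndependent ℚ (fun i : {x // x ∈ T} => E d lam i.1) := by
  have hc : ∀ i : {x // x ∈ T}, (i.1 - 1) < d := fun i => by
    have := hT i.2; simp only [Finset.mem_Icc] at this; omega
  have key : (fun i : {x // x ∈ T} => E d lam i.1)
      = (⇑(Pi.basisFun ℚ (Fin d))) ∘ (fun i : {x // x ∈ T} => (⟨i.1 - 1, hc i⟩ : Fin d)) := by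
    funext i
    have hi := hT i.2
    simp only [Finset.mem_Icc] at hi
    rw [E, if_pos ⟨hi.1, hi.2⟩]
    funext j
    simp [Function.comp, Pi.basisFun_apply, Pi.single_apply, Fin.val_eq_val,
      Fin.ext_iff, eq_comm]
  rw [key]
  exact (Pi.basisFun ℚ (Fin d)).linearIndependent.comp _
    (fun a b h => by
      have h2 := congrArg Fin.val h
      have ha := hT a.2; have hb := hT b.2
      simp only [Finset.mem_Icc] at ha hb
      simp only [] at h2
      exact Subtype.ext (by omega))

lemma exchange (hI : IdxOk d g lam k I) {I' : Finset ℕ} (hI' : IdxOk d g lam k I')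
    (hmin : pair d ν (∑ i ∈ I, E d lam i) = ordJ d g lam k ν)
    (hmin' : pair d ν (∑ i ∈ I', E d lam i) = ordJ d g lam k ν)
    {x : ℕ} (hxI' : x ∈ I') (hxL : E d lam x ∉ spanOf d lam I)
    (hok : x ≤ d ∨ (I.filter fun i => d + 1 ≤ i) = ∅) :
    phiJ d g lam (k + 1) ν ≤ phiJ d g lam k ν := by
  obtain ⟨y, hyI', hymax⟩ :=
    Finset.exists_max_image I' (fun i => pair d ν (E d lam i)) ⟨x, hxI'⟩
  have hxI : x ∉ I := fun h => hxL (Submodule.subset_span ⟨x, by simpa using h, rfl⟩)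
  have h1 : ordJ d g lam (k + 1) ν ≤ pair d ν (E d lam x) + ordJ d g lam k ν := by
    have h := ordJ_le (ν := ν) (hI.insert' (hI'.2.1 hxI') hxL hok)
    rwa [Finset.sum_insert hxI, pair_add, hmin] at h
  have h2 : ordJ d g lam (k - 1) ν ≤ ordJ d g lam k ν - pair d ν (E d lam y) := by
    have h := ordJ_le (ν := ν) (hI'.erase' y hyI')
    rwa [Finset.sum_erase_eq_sub hyI', pair_sub, hmin'] at h
  have hv : pair d ν (E d lam x) ≤ pair d ν (E d lam y) := hymax x hxI'
  simp only [phiJ, Nat.add_sub_cancel]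
  linarith

lemma lam_mono_chain (hmono : ∀ j, 1 ≤ j → j < g → ∀ i, lam j i ≤ lam (j + 1) i)
    {a b : ℕ} (h1 : 1 ≤ a) (h2 : a ≤ b) (h3 : b ≤ g) (i : Fin d) : lam a i ≤ lam b i := by
  induction b with
  | zero => omega
  | succ n ih =>
    rcases Nat.lt_or_ge a (n + 1) with h | h
    · exact le_trans (ih (by omega) (by omega)) (hmono n (by omega) (by omega) i)
    · have hab : a = n + 1 := by omega
      rw [hab]

lemma lam_eq_of_pair_eq (hmono : ∀ j, 1 ≤ j → j < g → ∀ i, lam j i ≤ lam (j + 1) i)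
    (hνpos : ∀ c : Fin d, 0 < ν c) {a b : ℕ} (h1 : 1 ≤ a) (hab : a < b) (h3 : b ≤ g)
    (hp : pair d ν (lam a) = pair d ν (lam b)) : lam a = lam b := by
  have h0 : pair d ν (lam b - lam a) = 0 := by rw [pair_sub]; linarith
  have hnn : ∀ c : Fin d, 0 ≤ ν c * (lam b c - lam a c) := fun c =>
    mul_nonneg (hνpos c).le
      (by have := lam_mono_chain hmono h1 hab.le h3 c; linarith)
  have hz : ∀ c ∈ Finset.univ, ν c * ((lam b - lam a) c) = 0 := by
    refine (Finset.sum_eq_zero_iff_of_nonneg ?_).1 h0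
    intro c _
    simpa using hnn c
  funext c
  have h2 := hz c (Finset.mem_univ c)
  have h3' := (hνpos c).ne'
  simp only [Pi.sub_apply] at h2
  rcases mul_eq_zero.1 h2 with h | h
  · exact absurd h h3'
  · linarith

end Helpers

/-- Suppose `φ_k(ν) < φ_{k+1}(ν)` (which holds automatically when `k = d`, since
`φ_{d+1} = +∞`). If two elements of `J_k`, each written as a sum of `k` linearly
independent vectors among `e_1, …, e_{d+g}` with at most one index exceeding `d`, both
attain the minimum `ord_{J_k}(ν)`, then their summands span the same subspace. -/
theorem statement5 (d g : ℕ) (lam : ℕ → Fin d → ℚ) (hd : 1 ≤ d) (hg : 1 ≤ g)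
    (hnn : ∀ j, 1 ≤ j → j ≤ g → ∀ i, 0 ≤ lam j i)
    (hmono : ∀ j, 1 ≤ j → j < g → ∀ i, lam j i ≤ lam (j + 1) i)
    (hnotin : ∀ j, 1 ≤ j → j ≤ g → lam j ∉ Mlat d lam (j - 1))
    (ν : Fin d → ℚ) (hν : ν ∈ Ndual d g lam)
    (hpos : ∀ i, 1 ≤ i → i ≤ d → 0 < pair d ν (E d lam i))
    (k : ℕ) (hk1 : 1 ≤ k) (hkd : k ≤ d)
    (hphi : k < d → phiJ d g lam k ν < phiJ d g lam (k + 1) ν)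
    (I I' : Finset ℕ) (hI : IdxOk d g lam k I) (hI' : IdxOk d g lam k I')
    (hmin : pair d ν (∑ i ∈ I, E d lam i) = ordJ d g lam k ν)
    (hmin' : pair d ν (∑ i ∈ I', E d lam i) = ordJ d g lam k ν) :
    spanOf d lam I = spanOf d lam I' := by
  classical
  by_contra hne
  have hνpos : ∀ c : Fin d, 0 < ν c := fun c => by
    have h := hpos (c.1 + 1) (by omega) (by omega)
    rwa [pair_E_coord] at h
  rcases eq_or_lt_of_le hkd with hkd' | hkd'
  · -- k = d : both spans are everything
    apply hne
    have h1 : spanOf d lam I = ⊤ := Submodule.eq_top_of_finrank_eq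
      (by rw [finrank_spanOf hI, hkd', Module.finrank_fin_fun])
    have h2 : spanOf d lam I' = ⊤ := Submodule.eq_top_of_finrank_eq
      (by rw [finrank_spanOf hI', hkd', Module.finrank_fin_fun])
    rw [h1, h2]
  · have hφ := hphi hkd'
    have hex : ∀ (J J' : Finset ℕ), IdxOk d g lam k J → IdxOk d g lam k J' →
        spanOf d lam J ≠ spanOf d lam J' → ∃ x ∈ J', E d lam x ∉ spanOf d lam J := by
      intro J J' hJ hJ' hneJ
      by_contra hc
      push_neg at hc
      have hle : spanOf d lam J' ≤ spanOf d lam J := by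
        rw [spanOf, Submodule.span_le]
        rintro v ⟨x, hx, rfl⟩
        exact hc x hx
      exact hneJ ((Submodule.eq_of_le_of_finrank_le hle
        (by rw [finrank_spanOf hJ, finrank_spanOf hJ'])).symm)
    by_cases hgood :
        (∃ x ∈ I', E d lam x ∉ spanOf d lam I ∧
          (x ≤ d ∨ (I.filter fun i => d + 1 ≤ i) = ∅))
        ∨ (∃ x ∈ I, E d lam x ∉ spanOf d lam I' ∧
          (x ≤ d ∨ (I'.filter fun i => d + 1 ≤ i) = ∅))
    · rcases hgood with ⟨x, hx1, hx2, hx3⟩ | ⟨x, hx1, hx2, hx3⟩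
      · exact absurd (exchange hI hI' hmin hmin' hx1 hx2 hx3) (not_le.2 hφ)
      · exact absurd (exchange hI' hI hmin' hmin hx1 hx2 hx3) (not_le.2 hφ)
    · push_neg at hgood
      obtain ⟨hbad1, hbad2⟩ := hgood
      obtain ⟨x, hxI', hxL⟩ := hex I I' hI hI' hne
      obtain ⟨x₀, hx0I, hx0L'⟩ := hex I' I hI' hI (Ne.symm hne)
      obtain ⟨hdx, -⟩ := hbad1 x hxI' hxL
      obtain ⟨hdx0, -⟩ := hbad2 x₀ hx0I hx0L'
      -- The filters are the singletons {x} and {x₀}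
      have hFI' : I'.filter (fun i => d + 1 ≤ i) = {x} := by
        apply Finset.eq_singleton_iff_unique_mem.2
        refine ⟨Finset.mem_filter.2 ⟨hxI', by omega⟩, ?_⟩
        intro b hb
        by_contra hbx
        exact absurd (Finset.one_lt_card.2
          ⟨b, hb, x, Finset.mem_filter.2 ⟨hxI', by omega⟩, hbx⟩) (not_lt.2 hI'.2.2.1)
      have hFI : I.filter (fun i => d + 1 ≤ i) = {x₀} := by
        apply Finset.eq_singleton_iff_unique_mem.2
        refine ⟨Finset.mem_filter.2 ⟨hx0I, by omega⟩, ?_⟩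
        intro b hb
        by_contra hbx
        exact absurd (Finset.one_lt_card.2
          ⟨b, hb, x₀, Finset.mem_filter.2 ⟨hx0I, by omega⟩, hbx⟩) (not_lt.2 hI.2.2.1)
      -- All other elements are ≤ d, with basis vector in the other span
      have hmemL : ∀ i ∈ I', i ≠ x → i ≤ d ∧ E d lam i ∈ spanOf d lam I := by
        intro i hi hix
        have hid : i ≤ d := by
          by_contra h
          have hf : i ∈ I'.filter (fun i => d + 1 ≤ i) :=
            Finset.mem_filter.2 ⟨hi, by omega⟩
          rw [hFI'] at hf
          exact hix (Finset.mem_singleton.1 hf)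
        refine ⟨hid, ?_⟩
        by_contra h
        obtain ⟨h1, -⟩ := hbad1 i hi h
        omega
      have hmemL' : ∀ i ∈ I, i ≠ x₀ → i ≤ d ∧ E d lam i ∈ spanOf d lam I' := by
        intro i hi hix
        have hid : i ≤ d := by
          by_contra h
          have hf : i ∈ I.filter (fun i => d + 1 ≤ i) :=
            Finset.mem_filter.2 ⟨hi, by omega⟩
          rw [hFI] at hf
          exact hix (Finset.mem_singleton.1 hf)
        refine ⟨hid, ?_⟩
        by_contra h
        obtain ⟨h1, -⟩ := hbad2 i hi h
        omega
      set A : Finset ℕ := I.erase x₀ with hA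
      set A' : Finset ℕ := I'.erase x with hA'
      set T : Finset ℕ := A ∪ A' with hT
      have hcardA : A.card = k - 1 := by rw [hA, Finset.card_erase_of_mem hx0I, hI.1]
      have hcardA' : A'.card = k - 1 := by rw [hA', Finset.card_erase_of_mem hxI', hI'.1]
      have hAsub : ∀ i ∈ A, i ≤ d ∧ E d lam i ∈ spanOf d lam I ∧ E d lam i ∈ spanOf d lam I' := by
        intro i hi
        have hiI : i ∈ I := Finset.mem_of_mem_erase hi
        have hix : i ≠ x₀ := Finset.ne_of_mem_erase hi
        obtain ⟨h1, h2⟩ := hmemL' i hiI hix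
        exact ⟨h1, Submodule.subset_span ⟨i, by simpa using hiI, rfl⟩, h2⟩
      have hA'sub : ∀ i ∈ A', i ≤ d ∧ E d lam i ∈ spanOf d lam I ∧ E d lam i ∈ spanOf d lam I' := by
        intro i hi
        have hiI : i ∈ I' := Finset.mem_of_mem_erase hi
        have hix : i ≠ x := Finset.ne_of_mem_erase hi
        obtain ⟨h1, h2⟩ := hmemL i hiI hix
        exact ⟨h1, h2, Submodule.subset_span ⟨i, by simpa using hiI, rfl⟩⟩
      have hTsub : ∀ i ∈ T, i ≤ d ∧ E d lam i ∈ spanOf d lam I ∧ E d lam i ∈ spanOf d lam I' := by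
        intro i hi
        rcases Finset.mem_union.1 hi with hi | hi
        · exact hAsub i hi
        · exact hA'sub i hi
      have hTIcc : T ⊆ Finset.Icc 1 d := by
        intro i hi
        have h1 := (hTsub i hi).1
        have h2 : 1 ≤ i := by
          rcases Finset.mem_union.1 hi with hi | hi
          · have := hI.2.1 (Finset.mem_of_mem_erase hi)
            simp only [Finset.mem_Icc] at this; omega
          · have := hI'.2.1 (Finset.mem_of_mem_erase hi)
            simp only [Finset.mem_Icc] at this; omega
        simp only [Finset.mem_Icc]; omega
      have hTli := li_std (lam := lam) T hTIcc
      have hrT : Module.finrank ℚ (spanOf d lam T) = T.card := finrank_spanOf_card hTli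
      have hspanTle : spanOf d lam T ≤ spanOf d lam I := by
        rw [spanOf, Submodule.span_le]
        rintro v ⟨i, hi, rfl⟩
        exact (hTsub i (by simpa using hi)).2.1
      have hspanTle' : spanOf d lam T ≤ spanOf d lam I' := by
        rw [spanOf, Submodule.span_le]
        rintro v ⟨i, hi, rfl⟩
        exact (hTsub i (by simpa using hi)).2.2
      have hcardT : T.card ≤ k := by
        have := Submodule.finrank_mono hspanTle
        rw [hrT, finrank_spanOf hI] at this
        exact this
      rcases eq_or_lt_of_le hcardT with hTk | hTk
      · -- |T| = k : both spans equal span of T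
        have e1 : spanOf d lam T = spanOf d lam I :=
          Submodule.eq_of_le_of_finrank_le hspanTle
            (by rw [finrank_spanOf hI, hrT, hTk])
        have e2 : spanOf d lam T = spanOf d lam I' :=
          Submodule.eq_of_le_of_finrank_le hspanTle'
            (by rw [finrank_spanOf hI', hrT, hTk])
        exact hne (e1 ▸ e2)
      · -- |T| = k - 1 : A = A' = T, compare the two lambdas
        have hAT : A = T := Finset.eq_of_subset_of_card_le
          Finset.subset_union_left (by omega)
        have hA'T : A' = T := Finset.eq_of_subset_of_card_le
          Finset.subset_union_right (by omega)
        have hAA' : A = A' := hAT.trans hA'T.symm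
        -- equal pairings of the two lambdas
        have hsum : pair d ν (E d lam x₀) = pair d ν (E d lam x) := by
          have e1 : pair d ν (∑ i ∈ A, E d lam i)
              = ordJ d g lam k ν - pair d ν (E d lam x₀) := by
            rw [hA, Finset.sum_erase_eq_sub hx0I, pair_sub, hmin]
          have e2 : pair d ν (∑ i ∈ A', E d lam i)
              = ordJ d g lam k ν - pair d ν (E d lam x) := by
            rw [hA', Finset.sum_erase_eq_sub hxI', pair_sub, hmin']
          rw [hAA'] at e1
          rw [e1] at e2
          linarith
        -- identify the lambdas
        have hxb := hI'.2.1 hxI'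
        have hx0b := hI.2.1 hx0I
        simp only [Finset.mem_Icc] at hxb hx0b
        have hEx : E d lam x = lam (x - d) := by
          rw [E, if_neg (by omega)]
        have hEx0 : E d lam x₀ = lam (x₀ - d) := by
          rw [E, if_neg (by omega)]
        have hxx0 : x ≠ x₀ := by
          intro h
          exact hxL (h ▸ Submodule.subset_span ⟨x₀, by simpa using hx0I, rfl⟩)
        have hlameq : lam (x - d) = lam (x₀ - d) := by
          rcases Nat.lt_or_ge (x - d) (x₀ - d) with h | h
          · exact lam_eq_of_pair_eq hmono hνpos (by omega) h (by omega)
              (by rw [← hEx, ← hEx0, hsum])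
          · have h' : x₀ - d < x - d := by omega
            exact (lam_eq_of_pair_eq hmono hνpos (by omega) h' (by omega)
              (by rw [← hEx, ← hEx0, hsum])).symm
        exact hxL (by
          rw [hEx, hlameq, ← hEx0]
          exact Submodule.subset_span ⟨x₀, by simpa using hx0I, rfl⟩)

end QO
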